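/- If |T| ≤ C(n²/A, q/2)^{0.95B}, then every y ∈ Y can be encoded with at most 1.99·q·log n bits, and hence |Y| ≤ 2^{1.99 q log n}, so μ_y(Y) ≤ 2^{−0.01·q·log n} where μ_y is uniform over all n^{2q} q-tuples of grid points. -/

import Mathlib

open Real Finset


private lemma aux_near {a b m : ℕ} (hm : 0 < m) (h : a / m = b / m) : a < b + m := by
  have h2 : m * (b / m) ≤ b := Nat.mul_div_le b m
  have h3 : a % m < m := Nat.mod_lt _ hm
  calc a = m * (a / m) + a % m := (Nat.div_add_mod a m).symm
    _ = m * (b / m) + a % m := by rw [h]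
    _ < b + m := by omega

set_option maxRecDepth 4000
set_option maxHeartbeats 1000000



private lemma aux_pow_le_factorial (s : ℕ) : (s : ℝ) ^ s ≤ 4 ^ s * (Nat.factorial s) := by
  induction s with
  | zero => simp
  | succ s ih =>
    have hs4 : ((s : ℝ) + 1) ^ s ≤ 4 * (s : ℝ) ^ s := by
      rcases Nat.eq_zero_or_pos s with h | h
      · subst h; norm_num
      · have hsp : (0 : ℝ) < s := by exact_mod_cast h
        have h2 : (1 + 1 / (s : ℝ)) ≤ Real.exp (1 / s) := by
          have := Real.add_one_le_exp (1 / (s : ℝ)); linarith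
        have h3 : ((1 : ℝ) + 1 / s) ^ s ≤ (Real.exp (1 / s)) ^ s :=
          pow_le_pow_left₀ (by positivity) h2 s
        have h4 : (Real.exp (1 / (s : ℝ))) ^ s = Real.exp 1 := by
          rw [← Real.exp_nat_mul]; congr 1; field_simp
        have h5 : Real.exp 1 ≤ 4 := by nlinarith [Real.exp_one_lt_d9]
        have h6 : ((s : ℝ) + 1) ^ s = (s : ℝ) ^ s * (1 + 1 / s) ^ s := by
          rw [← mul_pow]; congr 1; field_simp
        rw [h6]
        have h7 : ((1 : ℝ) + 1 / s) ^ s ≤ 4 := by rw [h4] at h3; linarith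
        nlinarith [pow_nonneg hsp.le s]
    have hpos : (0 : ℝ) ≤ (s : ℝ) + 1 := by positivity
    have hfac : (0 : ℝ) ≤ (Nat.factorial s : ℝ) := by positivity
    push_cast [Nat.factorial_succ]
    calc ((s : ℝ) + 1) ^ (s + 1) = ((s : ℝ) + 1) * ((s : ℝ) + 1) ^ s := by ring
      _ ≤ ((s : ℝ) + 1) * (4 * (s : ℝ) ^ s) := mul_le_mul_of_nonneg_left hs4 hpos
      _ ≤ ((s : ℝ) + 1) * (4 * (4 ^ s * (Nat.factorial s))) := by
          have : (4 : ℝ) * (s : ℝ) ^ s ≤ 4 * (4 ^ s * (Nat.factorial s)) := by linarith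
          exact mul_le_mul_of_nonneg_left this hpos
      _ = 4 ^ (s + 1) * (((s : ℝ) + 1) * (Nat.factorial s)) := by ring

private lemma aux_choose_le (m s : ℕ) (hs : 0 < s) :
    (Nat.choose m s : ℝ) ≤ (4 * m / s) ^ s := by
  have h1 : (Nat.choose m s : ℝ) ≤ (m : ℝ) ^ s / (Nat.factorial s) := by
    have := Nat.choose_le_pow_div (α := ℝ) s m
    push_cast at this ⊢
    convert this using 2
  have h2 := aux_pow_le_factorial s
  have hfac : (0 : ℝ) < (Nat.factorial s : ℝ) := by exact_mod_cast Nat.factorial_pos s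
  have hsp : (0 : ℝ) < (s : ℝ) := by exact_mod_cast hs
  have key : (m : ℝ) ^ s / (Nat.factorial s) ≤ (4 * m / s) ^ s := by
    rw [div_pow, div_le_div_iff₀ hfac (by positivity)]
    have hmn : (0 : ℝ) ≤ (m : ℝ) ^ s := by positivity
    calc (m : ℝ) ^ s * (s : ℝ) ^ s ≤ (m : ℝ) ^ s * (4 ^ s * (Nat.factorial s)) :=
          mul_le_mul_of_nonneg_left h2 hmn
      _ = ((4 : ℝ) * m) ^ s * (Nat.factorial s) := by rw [mul_pow]; ring
  exact h1.trans key


section Stmt9Aux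

variable {n q A α B d : ℕ}


variable {n q A α B d : ℕ}

private lemma decode_aux
    (hA : 0 < A) (hα : 0 < α) (hn0 : 0 < n) (hd0 : 0 < d) (hdm : d * α ^ B = n)
    (Y : Finset (Fin q → Fin n × Fin n))
    (sel : (Fin q → Fin n × Fin n) → Finset (Fin q))
    (hsel : ∀ y ∈ Y, (sel y).card = q / 2 ∧
      ∀ i ∈ sel y, ∀ j ∈ sel y, i ≠ j →
        A * α ≤ ((((y i).1 : ℕ) : ℤ) - (((y j).1 : ℕ) : ℤ)).natAbs *
                ((((y i).2 : ℕ) : ℤ) - (((y j).2 : ℕ) : ℤ)).natAbs)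
    (y : Fin q → Fin n × Fin n) (hy : y ∈ Y) (y' : Fin q → Fin n × Fin n) (hy' : y' ∈ Y)
    (h1 : ∀ j, ((y j).1 : ℕ) = ((y' j).1 : ℕ))
    (hS : sel y = sel y')
    (hH : (Finset.range (B + 1)).biUnion (fun i => (sel y).image
          (fun j => (i, ((y j).1 : ℕ) * n / (A * α ^ i), ((y j).2 : ℕ) * α ^ i / n)))
        = (Finset.range (B + 1)).biUnion (fun i => (sel y').image
          (fun j => (i, ((y' j).1 : ℕ) * n / (A * α ^ i), ((y' j).2 : ℕ) * α ^ i / n))))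
    (h4 : ∀ j, (if j ∈ sel y then ((y j).2 : ℕ) % d else ((y j).2 : ℕ)) =
          (if j ∈ sel y' then ((y' j).2 : ℕ) % d else ((y' j).2 : ℕ))) :
    y = y' := by
  have hsep := (hsel y hy).2
  have main : ∀ i, i ≤ B → ∀ j ∈ sel y,
      ((y' j).2 : ℕ) * α ^ i / n = ((y j).2 : ℕ) * α ^ i / n := by
    intro i
    induction i with
    | zero =>
      intro _ j _
      rw [pow_zero, mul_one, mul_one, Nat.div_eq_of_lt (y' j).2.isLt,
        Nat.div_eq_of_lt (y j).2.isLt]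
    | succ i ih =>
      intro hiB j hj
      have hmem : ((i + 1 : ℕ), ((y' j).1 : ℕ) * n / (A * α ^ (i + 1)),
          ((y' j).2 : ℕ) * α ^ (i + 1) / n) ∈
          (Finset.range (B + 1)).biUnion (fun i => (sel y').image
          (fun j => (i, ((y' j).1 : ℕ) * n / (A * α ^ i), ((y' j).2 : ℕ) * α ^ i / n))) := by
        refine Finset.mem_biUnion.mpr ⟨i + 1, Finset.mem_range.mpr (by omega), ?_⟩
        exact Finset.mem_image.mpr ⟨j, hS ▸ hj, rfl⟩
      rw [← hH] at hmem
      obtain ⟨i', hi', hmem2⟩ := Finset.mem_biUnion.mp hmem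
      obtain ⟨j', hj', heq⟩ := Finset.mem_image.mp hmem2
      obtain ⟨hei, her, hec⟩ : i' = i + 1 ∧
          ((y j').1 : ℕ) * n / (A * α ^ i') = ((y' j).1 : ℕ) * n / (A * α ^ (i + 1)) ∧
          ((y j').2 : ℕ) * α ^ i' / n = ((y' j).2 : ℕ) * α ^ (i + 1) / n := by
        simpa [Prod.ext_iff] using heq
      subst hei
      by_cases hjj : j' = j
      · subst hjj; exact hec.symm
      · exfalso
        have hcomp : ∀ z : ℕ, z * α ^ (i + 1) / n / α = z * α ^ i / n := by
          intro z
          rw [Nat.div_div_eq_div_mul, pow_succ, ← mul_assoc, Nat.mul_div_mul_right _ _ hα]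
        have hc_i : ((y j').2 : ℕ) * α ^ i / n = ((y j).2 : ℕ) * α ^ i / n := by
          have e1 : ((y j').2 : ℕ) * α ^ i / n = ((y' j).2 : ℕ) * α ^ i / n := by
            rw [← hcomp (((y j').2 : ℕ)), hec, hcomp]
          rw [e1]; exact ih (Nat.le_of_succ_le hiB) j hj
        have her' : ((y j').1 : ℕ) * n / (A * α ^ (i + 1))
            = ((y j).1 : ℕ) * n / (A * α ^ (i + 1)) := by rw [her, ← h1 j]
        set r1 := ((y j).1 : ℕ)
        set r2 := ((y j').1 : ℕ)
        set c1 := ((y j).2 : ℕ)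
        set c2 := ((y j').2 : ℕ)
        have hM1 : 0 < A * α ^ (i + 1) := by positivity
        have hd1 : r2 * n < r1 * n + A * α ^ (i + 1) := aux_near hM1 her'
        have hd2 : r1 * n < r2 * n + A * α ^ (i + 1) := aux_near hM1 her'.symm
        have hcc1 : c2 * α ^ i < c1 * α ^ i + n := aux_near hn0 hc_i
        have hcc2 : c1 * α ^ i < c2 * α ^ i + n := aux_near hn0 hc_i.symm
        have hAα := hsep j hj j' hj' (fun h => hjj h.symm)
        set Dr := (((r1 : ℤ) - r2)).natAbs with hDrdef
        set Dc := (((c1 : ℤ) - c2)).natAbs with hDcdef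
        have hDr : Dr * n < A * α ^ (i + 1) := by
          have h6 : Dr * n = (((r1 * n : ℕ) : ℤ) - ((r2 * n : ℕ) : ℤ)).natAbs := by
            have h5 : ((r1 * n : ℕ) : ℤ) - ((r2 * n : ℕ) : ℤ) = ((r1 : ℤ) - r2) * n := by
              push_cast; ring
            rw [h5, Int.natAbs_mul, hDrdef]; simp
          omega
        have hDc : Dc * α ^ i < n := by
          have h6 : Dc * α ^ i = (((c1 * α ^ i : ℕ) : ℤ) - ((c2 * α ^ i : ℕ) : ℤ)).natAbs := by
            have h5 : ((c1 * α ^ i : ℕ) : ℤ) - ((c2 * α ^ i : ℕ) : ℤ)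
                = ((c1 : ℤ) - c2) * α ^ i := by push_cast; ring
            rw [h5, Int.natAbs_mul, hDcdef]; simp [Int.natAbs_pow]
          omega
        have z1 : (Dr : ℤ) * n < A * α ^ (i + 1) := by exact_mod_cast hDr
        have z2 : (Dc : ℤ) * α ^ i < n := by exact_mod_cast hDc
        have z3 : (A : ℤ) * α ≤ Dr * Dc := by exact_mod_cast hAα
        have q1 : ((Dr : ℤ) * n) * ((Dc : ℤ) * α ^ i) < ((A : ℤ) * α ^ (i + 1)) * n := by
          have h01 : (0 : ℤ) < A * α ^ (i + 1) := by positivity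
          have h02 : (0 : ℤ) ≤ (Dc : ℤ) * α ^ i := by positivity
          calc ((Dr : ℤ) * n) * ((Dc : ℤ) * α ^ i)
              ≤ ((A : ℤ) * α ^ (i + 1)) * ((Dc : ℤ) * α ^ i) :=
                mul_le_mul_of_nonneg_right z1.le h02
            _ < ((A : ℤ) * α ^ (i + 1)) * n := by
                exact mul_lt_mul_of_pos_left z2 h01
        have q2 : (A : ℤ) * α * (n * α ^ i) ≤ ((Dr : ℤ) * Dc) * (n * α ^ i) :=
          mul_le_mul_of_nonneg_right z3 (by positivity)
        have e : ((Dr : ℤ) * n) * ((Dc : ℤ) * α ^ i) = ((Dr : ℤ) * Dc) * (n * α ^ i) := by ring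
        have e2 : ((A : ℤ) * α ^ (i + 1)) * n = (A : ℤ) * α * (n * α ^ i) := by ring
        rw [e, e2] at q1
        linarith
  funext j
  have hfst : (y j).1 = (y' j).1 := Fin.ext (h1 j)
  by_cases hj : j ∈ sel y
  · have hB' := main B le_rfl j hj
    have hred : ∀ z : ℕ, z * α ^ B / n = z / d := by
      intro z
      rw [← hdm, Nat.mul_div_mul_right _ _ (pow_pos hα B)]
    have hdiv : ((y' j).2 : ℕ) / d = ((y j).2 : ℕ) / d := by
      rw [← hred, ← hred, hB']
    have hmod := h4 j
    rw [if_pos hj, if_pos (hS ▸ hj)] at hmod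
    have hsnd : ((y j).2 : ℕ) = ((y' j).2 : ℕ) := by
      conv_lhs => rw [← Nat.div_add_mod ((y j).2 : ℕ) d]
      conv_rhs => rw [← Nat.div_add_mod ((y' j).2 : ℕ) d]
      rw [← hdiv, hmod]
    exact Prod.ext hfst (Fin.ext hsnd)
  · have hmod := h4 j
    rw [if_neg hj, if_neg (fun h => hj (hS ▸ h))] at hmod
    exact Prod.ext hfst (Fin.ext hmod)



variable {n q A α B d : ℕ}

private lemma aux_count
    (hA : 0 < A) (hα : 0 < α) (hn0 : 0 < n) (hd0 : 0 < d) (hdn : d ≤ n)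
    (hdm : d * α ^ B = n)
    (Y : Finset (Fin q → Fin n × Fin n))
    (sel : (Fin q → Fin n × Fin n) → Finset (Fin q))
    (hsel : ∀ y ∈ Y, (sel y).card = q / 2 ∧
      ∀ i ∈ sel y, ∀ j ∈ sel y, i ≠ j →
        A * α ≤ ((((y i).1 : ℕ) : ℤ) - (((y j).1 : ℕ) : ℤ)).natAbs *
                ((((y i).2 : ℕ) : ℤ) - (((y j).2 : ℕ) : ℤ)).natAbs)
    (T : Finset (Finset (ℕ × ℕ × ℕ)))
    (hTmem : ∀ y ∈ Y,
      (Finset.range (B + 1)).biUnion (fun i => (sel y).image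
        (fun j => (i, ((y j).1 : ℕ) * n / (A * α ^ i), ((y j).2 : ℕ) * α ^ i / n))) ∈ T)
    (decode : ∀ y ∈ Y, ∀ y' ∈ Y,
      (∀ j, ((y j).1 : ℕ) = ((y' j).1 : ℕ)) → sel y = sel y' →
      ((Finset.range (B + 1)).biUnion (fun i => (sel y).image
        (fun j => (i, ((y j).1 : ℕ) * n / (A * α ^ i), ((y j).2 : ℕ) * α ^ i / n)))
        = (Finset.range (B + 1)).biUnion (fun i => (sel y').image
        (fun j => (i, ((y' j).1 : ℕ) * n / (A * α ^ i), ((y' j).2 : ℕ) * α ^ i / n)))) →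
      (∀ j, (if j ∈ sel y then ((y j).2 : ℕ) % d else ((y j).2 : ℕ)) =
            (if j ∈ sel y' then ((y' j).2 : ℕ) % d else ((y' j).2 : ℕ))) → y = y') :
    Y.card ≤ n ^ q * (T.card * (q.choose (q / 2) * (d ^ (q / 2) * n ^ (q - q / 2)))) := by
  classical
  set Q : Finset (Finset (Fin q) × (Fin q → Fin n)) :=
    univ.filter (fun p => p.1.card = q / 2 ∧ ∀ j ∈ p.1, ((p.2 j : ℕ)) < d) with hQdef
  have hcard1 : Y.card ≤ ((univ : Finset (Fin q → Fin n)) ×ˢ T ×ˢ Q).card := by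
    apply Finset.card_le_card_of_injOn (fun y =>
      ((fun j => (y j).1 : Fin q → Fin n),
        (Finset.range (B + 1)).biUnion (fun i => (sel y).image
          (fun j => (i, ((y j).1 : ℕ) * n / (A * α ^ i), ((y j).2 : ℕ) * α ^ i / n))),
        (sel y, fun j => (⟨if j ∈ sel y then ((y j).2 : ℕ) % d else ((y j).2 : ℕ), by
          split_ifs
          · exact lt_of_lt_of_le (Nat.mod_lt _ hd0) hdn
          · exact (y j).2.isLt⟩ : Fin n))))
    · intro y hy
      simp only [Finset.mem_coe, Finset.mem_product, Finset.mem_univ, true_and]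
      refine ⟨hTmem y hy, Finset.mem_filter.mpr ⟨Finset.mem_univ _, (hsel y hy).1, ?_⟩⟩
      intro j hj
      simp only [hj, if_pos]
      exact Nat.mod_lt _ hd0
    · intro y hy y' hy' hE
      simp only [Prod.mk.injEq] at hE
      obtain ⟨e1, e2, e3, e4⟩ := hE
      apply decode y (Finset.mem_coe.mp hy) y' (Finset.mem_coe.mp hy')
      · intro j; exact congrArg Fin.val (congrFun e1 j)
      · exact e3
      · exact e2
      · intro j
        have h := congrArg Fin.val (congrFun e4 j)
        simpa using h
  have hcard2 : ((univ : Finset (Fin q → Fin n)) ×ˢ T ×ˢ Q).card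
      = n ^ q * (T.card * Q.card) := by
    rw [Finset.card_product, Finset.card_product, Finset.card_univ, Fintype.card_fun,
      Fintype.card_fin, Fintype.card_fin]
  have hQ : Q.card ≤ q.choose (q / 2) * (d ^ (q / 2) * n ^ (q - q / 2)) := by
    have hsub : Q ⊆ (univ.powersetCard (q / 2)).biUnion
        (fun S => {S} ×ˢ (univ.filter (fun h : Fin q → Fin n => ∀ j ∈ S, (h j : ℕ) < d))) := by
      intro p hp
      simp only [hQdef, Finset.mem_filter, Finset.mem_univ, true_and] at hp
      refine Finset.mem_biUnion.mpr ⟨p.1, Finset.mem_powersetCard_univ.mpr hp.1, ?_⟩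
      refine Finset.mem_product.mpr ⟨Finset.mem_singleton_self _, ?_⟩
      exact Finset.mem_filter.mpr ⟨Finset.mem_univ _, hp.2⟩
    calc Q.card ≤ _ := Finset.card_le_card hsub
      _ ≤ ∑ S ∈ univ.powersetCard (q / 2),
          ({S} ×ˢ (univ.filter (fun h : Fin q → Fin n => ∀ j ∈ S, (h j : ℕ) < d))).card :=
        Finset.card_biUnion_le
      _ ≤ ∑ _S ∈ univ.powersetCard (q / 2), d ^ (q / 2) * n ^ (q - q / 2) := by
        apply Finset.sum_le_sum
        intro S hS
        rw [Finset.card_product, Finset.card_singleton, one_mul]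
        have hScard : S.card = q / 2 := Finset.mem_powersetCard_univ.mp hS
        have hstep : (univ.filter (fun h : Fin q → Fin n => ∀ j ∈ S, (h j : ℕ) < d)).card
            ≤ Fintype.card (∀ j : Fin q, Fin (if j ∈ S then d else n)) := by
          rw [← Finset.card_univ]
          apply Finset.card_le_card_of_injOn (fun h j =>
            (⟨(h j : ℕ) % (if j ∈ S then d else n), Nat.mod_lt _ (by
              split_ifs; exacts [hd0, hn0])⟩ : Fin (if j ∈ S then d else n)))
          · intro h _; exact Finset.mem_univ _
          · intro h1 hh1 h2 hh2 heq
            simp only [Finset.coe_filter, Set.mem_setOf_eq, Finset.mem_univ, true_and]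
              at hh1 hh2
            funext j
            have hj := congrArg Fin.val (congrFun heq j)
            simp only at hj
            apply Fin.ext
            by_cases hjS : j ∈ S
            · rw [if_pos hjS, Nat.mod_eq_of_lt (hh1 j hjS), Nat.mod_eq_of_lt (hh2 j hjS)] at hj
              exact hj
            · rw [if_neg hjS, Nat.mod_eq_of_lt (h1 j).isLt, Nat.mod_eq_of_lt (h2 j).isLt] at hj
              exact hj
        have hpi : Fintype.card (∀ j : Fin q, Fin (if j ∈ S then d else n))
            = d ^ (q / 2) * n ^ (q - q / 2) := by
          rw [Fintype.card_pi]
          have hcongr : ∀ j : Fin q, Fintype.card (Fin (if j ∈ S then d else n))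
              = (if j ∈ S then d else n) := fun j => Fintype.card_fin _
          rw [Finset.prod_congr rfl (fun j _ => hcongr j)]
          rw [← Finset.prod_mul_prod_compl S]
          rw [Finset.prod_congr rfl (fun j hj => if_pos hj),
            Finset.prod_congr rfl (fun j hj => if_neg (Finset.mem_compl.mp hj)),
            Finset.prod_const, Finset.prod_const, hScard, Finset.card_compl,
            Fintype.card_fin, hScard]
        rw [hpi] at hstep
        exact hstep
      _ = q.choose (q / 2) * (d ^ (q / 2) * n ^ (q - q / 2)) := by
        rw [Finset.sum_const, smul_eq_mul, Finset.card_powersetCard, Finset.card_univ,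
          Fintype.card_fin]
  calc Y.card ≤ _ := hcard1
    _ = n ^ q * (T.card * Q.card) := hcard2
    _ ≤ n ^ q * (T.card * (q.choose (q / 2) * (d ^ (q / 2) * n ^ (q - q / 2)))) := by
      exact Nat.mul_le_mul_left _ (Nat.mul_le_mul_left _ hQ)


end Stmt9Aux

private lemma aux_final (n k q A α B d sN Tc Cc : ℕ)
    (hn : 2 ^ 131072 ≤ n)
    (hA : 0 < A) (hα : 0 < α) (hq : q = 2 * sN) (hs1 : 1 ≤ sN)
    (hsqrt : Real.sqrt n ≤ (k : ℝ))
    (hqk : (q : ℝ) * (Real.logb 2 n) ^ 999 ≤ (k : ℝ))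
    (hkq : (k : ℝ) ≤ (q : ℝ) * (Real.logb 2 n) ^ 1001)
    (hA1 : 2 * (n : ℝ) ^ 2 * Real.logb 2 n / (k : ℝ) ≤ (A : ℝ))
    (hA2 : (A : ℝ) ≤ 8 * (n : ℝ) ^ 2 * Real.logb 2 n / (k : ℝ))
    (hα1 : (Real.logb 2 n) ^ 996 ≤ (α : ℝ))
    (hABn : α ^ B * A = n ^ 2)
    (hdm : d * α ^ B = n) (hd0 : 0 < d)
    (hCc : Cc = Nat.choose (α ^ B) sN)
    (hT1 : 1 ≤ Tc)
    (hTcard : (Tc : ℝ) ≤ (Cc : ℝ) ^ ((0.95 : ℝ) * B))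
    (Ycard : ℕ)
    (hcount : Ycard ≤ n ^ q * (Tc * (q.choose sN * (d ^ sN * n ^ sN)))) :
    (Ycard : ℝ) ≤ 2 ^ ((1.99 : ℝ) * q * Real.logb 2 n) ∧
    (Ycard : ℝ) / ((n : ℝ) ^ 2) ^ q ≤ 2 ^ (-(0.01 : ℝ) * q * Real.logb 2 n) := by
  have h1 : ((2 : ℝ)) ^ (131072 : ℕ) ≤ (n : ℝ) := by exact_mod_cast hn
  clear hn
  have hn2 : 2 ≤ n := by
    have h2 : ((2:ℝ))^(1:ℕ) ≤ ((2:ℝ))^(131072:ℕ) :=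
      pow_le_pow_right₀ (by norm_num) (by norm_num)
    have h3 : (2:ℝ) ≤ (n:ℝ) := by rw [pow_one] at h2; exact le_trans h2 h1
    exact_mod_cast h3
  have hn0 : 0 < n := by omega
  have hn0R : (0 : ℝ) < n := by exact_mod_cast hn0
  set L := Real.logb 2 n with hLdef
  have hLbig : (131072 : ℝ) ≤ L := by
    have h2 := Real.logb_le_logb_of_le one_lt_two (by positivity) h1
    rw [Real.logb_pow, Real.logb_self_eq_one one_lt_two, mul_one, ← hLdef] at h2
    exact_mod_cast h2
  clear h1
  have hL0 : (0 : ℝ) < L := by linarith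
  have hL1 : (1 : ℝ) ≤ L := by linarith
  set l := Real.logb 2 L with hldef
  have hl21 : (17 : ℝ) ≤ l := by
    have h1 : ((2 : ℝ)) ^ (17 : ℕ) ≤ L := by norm_num; linarith
    have h2 := Real.logb_le_logb_of_le one_lt_two (by positivity) h1
    rw [Real.logb_pow, Real.logb_self_eq_one one_lt_two, mul_one, ← hldef] at h2
    exact_mod_cast h2
  have hl0 : (0 : ℝ) < l := by linarith
  have hu := Real.sqrt_nonneg (L : ℝ)
  have husq : Real.sqrt L * Real.sqrt L = L := Real.mul_self_sqrt hL0.le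
  have hu362 : (362 : ℝ) ≤ Real.sqrt L := by
    rw [show (362:ℝ) = Real.sqrt (362^2) by rw [Real.sqrt_sq (by norm_num : (0:ℝ) ≤ 362)]]
    apply Real.sqrt_le_sqrt
    norm_num
    linarith
  have hlub : l ≤ 3 * Real.sqrt L := by
    have e1 : Real.log (Real.sqrt L) ≤ Real.sqrt L - 1 :=
      Real.log_le_sub_one_of_pos (Real.sqrt_pos.mpr hL0)
    have e2 : Real.log L = 2 * Real.log (Real.sqrt L) := by
      rw [Real.log_sqrt hL0.le]; ring
    have e3 : (0.6931471803 : ℝ) < Real.log 2 := Real.log_two_gt_d9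
    have e4 : l = Real.log L / Real.log 2 := rfl
    rw [e4, div_le_iff₀ (by linarith)]
    have hint : Real.sqrt L * 0.6931471803 ≤ Real.sqrt L * Real.log 2 :=
      mul_le_mul_of_nonneg_left (le_of_lt e3) hu
    linarith [e1, e2, hint, hu]
  have hk0R : (0 : ℝ) < k := lt_of_lt_of_le (Real.sqrt_pos.mpr hn0R) hsqrt
  have hsR : (1 : ℝ) ≤ (sN : ℝ) := by exact_mod_cast hs1
  have hs0 : (0 : ℝ) ≤ (sN : ℝ) := by linarith
  have hqR : (q : ℝ) = 2 * (sN : ℝ) := by rw [hq]; push_cast; ring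
  set M := ((α : ℝ)) ^ B with hMdef
  have hα1R : (1 : ℝ) ≤ (α : ℝ) := by exact_mod_cast hα
  have hM1 : (1 : ℝ) ≤ M := by
    calc (1:ℝ) = 1 ^ B := (one_pow B).symm
      _ ≤ (α : ℝ) ^ B := pow_le_pow_left₀ (by norm_num) hα1R B
  have hM0 : (0 : ℝ) < M := by positivity
  have hMA : (A : ℝ) * M = ((n : ℝ)) ^ 2 := by
    have h2 : ((α : ℝ)) ^ B * (A : ℝ) = ((n : ℝ)) ^ 2 := by exact_mod_cast hABn
    rw [hMdef]; linarith [h2]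
  have hdmR : (d : ℝ) * M = (n : ℝ) := by
    have h2 : ((d : ℝ)) * ((α : ℝ)) ^ B = (n : ℝ) := by exact_mod_cast hdm
    rw [hMdef]; exact h2
  have hd0R : (0 : ℝ) < d := by exact_mod_cast hd0
  have t1 : 2 * (n : ℝ)^2 * L ≤ A * k := by
    have := (div_le_iff₀ hk0R).mp hA1; linarith
  have t2 : (A : ℝ) * k ≤ 8 * (n : ℝ)^2 * L := by
    have := (le_div_iff₀ hk0R).mp hA2; linarith
  have hMk : M * (2 * L) ≤ k := by
    have u1 : M * (2*(n:ℝ)^2*L) ≤ M * ((A:ℝ)*k) := mul_le_mul_of_nonneg_left t1 (by linarith)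
    have u2 : M * ((A:ℝ)*k) = (n:ℝ)^2 * k := by
      rw [show M*((A:ℝ)*k) = ((A:ℝ)*M)*k from by ring, hMA]
    have u3 : (M * (2*L)) * (n:ℝ)^2 ≤ k * (n:ℝ)^2 := by
      have e : (M * (2*L)) * (n:ℝ)^2 = M * (2*(n:ℝ)^2*L) := by ring
      have e2 : k * (n:ℝ)^2 = (n:ℝ)^2 * k := by ring
      rw [e, e2]; linarith [u1, u2]
    exact le_of_mul_le_mul_right u3 (by positivity)
  have hkM : (k : ℝ) ≤ M * (8 * L) := by
    have u1 : M * ((A:ℝ)*k) ≤ M * (8*(n:ℝ)^2*L) := mul_le_mul_of_nonneg_left t2 (by linarith)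
    have u2 : M * ((A:ℝ)*k) = (n:ℝ)^2 * k := by
      rw [show M*((A:ℝ)*k) = ((A:ℝ)*M)*k from by ring, hMA]
    have u3 : k * (n:ℝ)^2 ≤ (M * (8*L)) * (n:ℝ)^2 := by
      have e : (M * (8*L)) * (n:ℝ)^2 = M * (8*(n:ℝ)^2*L) := by ring
      have e2 : k * (n:ℝ)^2 = (n:ℝ)^2 * k := by ring
      rw [e, e2]; linarith [u1, u2]
    exact le_of_mul_le_mul_right u3 (by positivity)
  have hLp : ∀ e : ℕ, (0:ℝ) < L ^ e := fun e => pow_pos hL0 e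
  have hsM : (sN : ℝ) ≤ M := by
    have c1 : 2*(sN:ℝ)*L^999 ≤ k := by rw [hqR] at hqk; linarith
    have c2 : ((sN:ℝ) * L^998) * (2*L) ≤ (4*M) * (2*L) := by
      have e : ((sN:ℝ) * L^998) * (2*L) = 2*(sN:ℝ)*L^999 := by ring
      rw [e]
      calc 2*(sN:ℝ)*L^999 ≤ k := c1
        _ ≤ M * (8*L) := hkM
        _ = (4*M)*(2*L) := by ring
    have c3 : (sN:ℝ) * L^998 ≤ 4*M := le_of_mul_le_mul_right c2 (by positivity)
    have c4 : (4:ℝ) ≤ L^998 := by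
      calc (4:ℝ) ≤ L := by linarith
        _ = L^1 := (pow_one L).symm
        _ ≤ L^998 := pow_le_pow_right₀ hL1 (by norm_num)
    have hint : (sN:ℝ) * 4 ≤ (sN:ℝ) * L^998 := mul_le_mul_of_nonneg_left c4 hs0
    linarith [c3, hint]
  have hMs1000 : M ≤ (sN:ℝ) * L^1000 := by
    have c1 : (k:ℝ) ≤ 2*(sN:ℝ)*L^1001 := by rw [hqR] at hkq; linarith
    have c2 : M * (2*L) ≤ ((sN:ℝ)*L^1000) * (2*L) := by
      calc M * (2*L) ≤ (k:ℝ) := hMk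
        _ ≤ 2*(sN:ℝ)*L^1001 := c1
        _ = ((sN:ℝ)*L^1000)*(2*L) := by ring
    exact le_of_mul_le_mul_right c2 (by positivity)
  set x := Real.logb 2 M with hxdef
  have hxB : (B:ℝ) * (996 * l) ≤ x := by
    have b1 : x = (B:ℝ) * Real.logb 2 (α:ℝ) := by
      rw [hxdef, hMdef, Real.logb_pow]
    have b2 : (996:ℝ) * l ≤ Real.logb 2 (α:ℝ) := by
      have h := Real.logb_le_logb_of_le one_lt_two (hLp 996) hα1
      rw [Real.logb_pow, ← hldef] at h
      exact_mod_cast h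
    have hB0 : (0:ℝ) ≤ (B:ℝ) := Nat.cast_nonneg B
    rw [b1]
    exact mul_le_mul_of_nonneg_left b2 hB0
  have hx49 : 0.49 * L ≤ x := by
    have hsn0 : (0:ℝ) < Real.sqrt n := Real.sqrt_pos.mpr hn0R
    have m1 : Real.sqrt n / (8*L) ≤ M := by
      rw [div_le_iff₀ (by positivity)]
      calc Real.sqrt n ≤ (k:ℝ) := hsqrt
        _ ≤ M * (8*L) := hkM
    have m2 := Real.logb_le_logb_of_le one_lt_two (div_pos hsn0 (by positivity)) m1
    have m3 : Real.logb 2 (Real.sqrt n / (8*L)) = L/2 - (3 + l) := by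
      rw [Real.logb_div (ne_of_gt hsn0) (by positivity),
        Real.logb_mul (by norm_num) (ne_of_gt hL0)]
      have m4 : Real.logb 2 (Real.sqrt n) = L/2 := by
        rw [hLdef]; simp only [Real.logb]; rw [Real.log_sqrt hn0R.le]; ring
      have m5 : Real.logb 2 (8:ℝ) = 3 := by
        rw [show (8:ℝ) = 2^(3:ℕ) by norm_num, Real.logb_pow,
          Real.logb_self_eq_one one_lt_two]
        try norm_num
      rw [m4, m5, ← hldef]
      try ring
    rw [m3, ← hxdef] at m2
    have hint : (0:ℝ) ≤ (Real.sqrt L - 362) * Real.sqrt L :=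
      mul_nonneg (sub_nonneg.mpr hu362) hu
    linarith [hlub, husq, hu362, hu, hint, m2, hLbig]
  have hlogd : Real.logb 2 (d:ℝ) = L - x := by
    have h := Real.logb_mul (x := (d:ℝ)) (y := M) (b := 2) (ne_of_gt hd0R) (ne_of_gt hM0)
    rw [hdmR, ← hLdef, ← hxdef] at h
    linarith [h]
  have hT0 : (0:ℝ) < Tc := by exact_mod_cast hT1
  have hsMnat : sN ≤ α ^ B := by
    have h : ((sN:ℕ):ℝ) ≤ ((α ^ B : ℕ):ℝ) := by push_cast; exact hsM
    exact_mod_cast h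
  have hC1 : (1:ℝ) ≤ (Cc:ℝ) := by
    rw [hCc]
    exact_mod_cast Nat.succ_le_of_lt (Nat.choose_pos hsMnat)
  have hTlog : Real.logb 2 (Tc:ℝ) ≤ 0.954 * (sN:ℝ) * x := by
    have w1 : Real.logb 2 (Tc:ℝ) ≤ Real.logb 2 ((Cc:ℝ) ^ ((0.95:ℝ)*B)) :=
      Real.logb_le_logb_of_le one_lt_two hT0 hTcard
    have w2 : Real.logb 2 ((Cc:ℝ) ^ ((0.95:ℝ)*B)) = ((0.95:ℝ)*B) * Real.logb 2 (Cc:ℝ) :=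
      Real.logb_rpow_eq_mul_logb_of_pos (by linarith)
    have w3 : (Cc:ℝ) ≤ (4 * M / (sN:ℝ)) ^ (sN:ℕ) := by
      rw [hCc]
      have h := aux_choose_le (α^B) sN hs1
      have e : ((α ^ B : ℕ):ℝ) = M := by rw [hMdef]; push_cast; ring
      rwa [e] at h
    have w4 : Real.logb 2 ((4*M/(sN:ℝ)) ^ (sN:ℕ)) = (sN:ℝ) * Real.logb 2 (4*M/(sN:ℝ)) :=
      Real.logb_pow _ _ _
    have hquot0 : (0:ℝ) < 4*M/(sN:ℝ) := div_pos (by linarith) (by linarith)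
    have w6 : Real.logb 2 (4*M/(sN:ℝ)) ≤ 2 + 1000*l := by
      have v1 : 4*M/(sN:ℝ) ≤ 4*L^1000 := by
        rw [div_le_iff₀ (by linarith)]
        linarith [hMs1000]
      have v2 := Real.logb_le_logb_of_le one_lt_two hquot0 v1
      have v3 : Real.logb 2 ((4:ℝ)*L^1000) = 2 + 1000*l := by
        rw [Real.logb_mul (by norm_num) (ne_of_gt (hLp 1000)), Real.logb_pow]
        have h4 : Real.logb 2 (4:ℝ) = 2 := by
          rw [show (4:ℝ) = 2^(2:ℕ) by norm_num, Real.logb_pow,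
            Real.logb_self_eq_one one_lt_two]
          try norm_num
        rw [h4, ← hldef]
        push_cast
        ring
      rw [v3] at v2
      exact v2
    have w7 : Real.logb 2 (Cc:ℝ) ≤ (sN:ℝ) * Real.logb 2 (4*M/(sN:ℝ)) := by
      calc Real.logb 2 (Cc:ℝ) ≤ Real.logb 2 ((4*M/(sN:ℝ))^(sN:ℕ)) :=
            Real.logb_le_logb_of_le one_lt_two (by linarith) w3
        _ = _ := w4
    have hB0 : (0:ℝ) ≤ (B:ℝ) := Nat.cast_nonneg B
    have w8 : Real.logb 2 (Tc:ℝ) ≤ ((0.95:ℝ)*B) * ((sN:ℝ) * Real.logb 2 (4*M/(sN:ℝ))) := by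
      calc Real.logb 2 (Tc:ℝ) ≤ ((0.95:ℝ)*B) * Real.logb 2 (Cc:ℝ) := by rw [← w2]; exact w1
        _ ≤ ((0.95:ℝ)*B) * ((sN:ℝ) * Real.logb 2 (4*M/(sN:ℝ))) :=
            mul_le_mul_of_nonneg_left w7 (by positivity)
    have w9 : ((0.95:ℝ)*B) * ((sN:ℝ) * Real.logb 2 (4*M/(sN:ℝ)))
        ≤ ((0.95:ℝ)*B) * ((sN:ℝ) * (2 + 1000*l)) := by
      apply mul_le_mul_of_nonneg_left _ (by positivity)
      exact mul_le_mul_of_nonneg_left w6 hs0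
    have hint1 : (sN:ℝ) * ((B:ℝ) * (996*l)) ≤ (sN:ℝ) * x :=
      mul_le_mul_of_nonneg_left hxB hs0
    have hint2 : (0:ℝ) ≤ (sN:ℝ) * (B:ℝ) * (0.184*l - 1.9) :=
      mul_nonneg (mul_nonneg hs0 hB0) (by linarith)
    linarith [w8, w9, hint1, hint2, hs0]
  have hch2 : q.choose sN ≤ 2 ^ q := by
    calc q.choose sN ≤ ∑ i ∈ Finset.range (q+1), q.choose i :=
          Finset.single_le_sum (fun i _ => Nat.zero_le _) (Finset.mem_range.mpr (by omega))
      _ = 2 ^ q := Nat.sum_range_choose q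
  have hchR : ((q.choose sN : ℕ):ℝ) ≤ (2:ℝ) ^ ((q:ℕ):ℝ) := by
    rw [Real.rpow_natCast]
    exact_mod_cast hch2
  have hn_rpow : (n:ℝ) = (2:ℝ) ^ L := (Real.rpow_logb two_pos (by norm_num) hn0R).symm
  have hpow2 : ∀ e : ℕ, ((n:ℝ)) ^ e = (2:ℝ) ^ (L * (e:ℝ)) := by
    intro e
    rw [hn_rpow, ← Real.rpow_natCast ((2:ℝ)^L) e, ← Real.rpow_mul (by norm_num : (0:ℝ) ≤ 2)]
  have hd_rpow : (d:ℝ) = (2:ℝ) ^ (L - x) := by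
    rw [← hlogd, Real.rpow_logb two_pos (by norm_num) hd0R]
  have hdpow : ((d:ℝ)) ^ (sN:ℕ) = (2:ℝ) ^ ((L - x) * (sN:ℝ)) := by
    rw [hd_rpow, ← Real.rpow_natCast ((2:ℝ)^(L-x)) sN, ← Real.rpow_mul (by norm_num : (0:ℝ) ≤ 2)]
  have hT2 : (Tc:ℝ) ≤ (2:ℝ) ^ (0.954*(sN:ℝ)*x) :=
    (Real.logb_le_iff_le_rpow one_lt_two hT0).mp hTlog
  have hcountR : (Ycard:ℝ) ≤ (n:ℝ)^q * ((Tc:ℝ) * (((q.choose sN : ℕ):ℝ) * ((d:ℝ)^(sN:ℕ) * (n:ℝ)^(sN:ℕ)))) := by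
    exact_mod_cast hcount
  have main1 : (Ycard : ℝ) ≤ (2:ℝ) ^ ((1.99:ℝ) * (q:ℝ) * L) := by
    calc (Ycard:ℝ) ≤ _ := hcountR
      _ = (2:ℝ)^(L*(q:ℝ)) * ((Tc:ℝ) * (((q.choose sN : ℕ):ℝ) *
            ((2:ℝ)^((L-x)*(sN:ℝ)) * (2:ℝ)^(L*(sN:ℝ))))) := by
          rw [hpow2 q, hdpow, hpow2 sN]
      _ ≤ (2:ℝ)^(L*(q:ℝ)) * ((2:ℝ)^(0.954*(sN:ℝ)*x) * ((2:ℝ)^((q:ℕ):ℝ) *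
            ((2:ℝ)^((L-x)*(sN:ℝ)) * (2:ℝ)^(L*(sN:ℝ))))) := by
          gcongr
      _ = (2:ℝ)^(L*(q:ℝ) + (0.954*(sN:ℝ)*x + (((q:ℕ):ℝ) + ((L-x)*(sN:ℝ) + L*(sN:ℝ))))) := by
          rw [← Real.rpow_add two_pos, ← Real.rpow_add two_pos, ← Real.rpow_add two_pos,
            ← Real.rpow_add two_pos]
      _ ≤ (2:ℝ)^((1.99:ℝ)*(q:ℝ)*L) := by
          apply Real.rpow_le_rpow_of_exponent_le one_le_two
          have p1 : (sN:ℝ)*(0.49*L) ≤ (sN:ℝ)*x := mul_le_mul_of_nonneg_left hx49 hs0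
          have p2 : (sN:ℝ)*131072 ≤ (sN:ℝ)*L := mul_le_mul_of_nonneg_left hLbig hs0
          rw [hqR]
          linarith [p1, p2, hsR]

  refine ⟨main1, ?_⟩
  have hden : ((n:ℝ)^2)^q = (2:ℝ)^(L*((2*q:ℕ):ℝ)) := by rw [← pow_mul]; exact hpow2 (2*q)
  calc (Ycard:ℝ)/((n:ℝ)^2)^q ≤ (2:ℝ)^((1.99:ℝ)*(q:ℝ)*L)/((n:ℝ)^2)^q := by gcongr
    _ = (2:ℝ)^((1.99:ℝ)*(q:ℝ)*L)/(2:ℝ)^(L*((2*q:ℕ):ℝ)) := by rw [hden]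
    _ = (2:ℝ)^((1.99:ℝ)*(q:ℝ)*L - L*((2*q:ℕ):ℝ)) := by rw [← Real.rpow_sub two_pos]
    _ = (2:ℝ)^(-(0.01:ℝ)*(q:ℝ)*L) := by
        congr 1
        push_cast
        ring


open Classical Real Finset in
/-- Case 1 of the rectangle bound for `2D-ORC`: if `Y` is a set of well-separated
`q`-tuples of grid points (each `y` carries an isolated subtuple `sel y` of size
`q/2`, pairwise far at threshold `Aα`) whose set `T` of hitting patterns satisfies
`|T| ≤ C(n²/A, q/2)^{0.95B}`, then `|Y| ≤ 2^{1.99·q·log n}` and hence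
`μy(Y) ≤ 2^{−0.01·q·log n}` under the uniform distribution over `q`-tuples. -/
theorem stmt9 :
    ∃ N : ℕ, ∀ n ≥ N, ∀ k q A α B : ℕ,
      0 < A → 0 < α → 2 ∣ q → 1 ≤ q →
      Real.sqrt n ≤ (k : ℝ) →
      (q : ℝ) * (Real.logb 2 n) ^ 999 ≤ (k : ℝ) →
      (k : ℝ) ≤ (q : ℝ) * (Real.logb 2 n) ^ 1001 →
      2 * (n : ℝ) ^ 2 * Real.logb 2 n / (k : ℝ) ≤ (A : ℝ) →
      (A : ℝ) ≤ 8 * (n : ℝ) ^ 2 * Real.logb 2 n / (k : ℝ) →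
      (Real.logb 2 n) ^ 996 ≤ (α : ℝ) → (α : ℝ) ≤ (Real.logb 2 n) ^ 998 →
      α ^ B * A = n ^ 2 → n ∣ A →
      ∀ (Y : Finset (Fin q → Fin n × Fin n))
        (sel : (Fin q → Fin n × Fin n) → Finset (Fin q)),
      (∀ y ∈ Y, (sel y).card = q / 2 ∧
        ∀ i ∈ sel y, ∀ j ∈ sel y, i ≠ j →
          A * α ≤ ((((y i).1 : ℕ) : ℤ) - (((y j).1 : ℕ) : ℤ)).natAbs *
                  ((((y i).2 : ℕ) : ℤ) - (((y j).2 : ℕ) : ℤ)).natAbs) →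
      ∀ T : Finset (Finset (ℕ × ℕ × ℕ)),
      (∀ y ∈ Y,
        (Finset.range (B + 1)).biUnion (fun i => (sel y).image
          (fun j => (i, ((y j).1 : ℕ) * n / (A * α ^ i), ((y j).2 : ℕ) * α ^ i / n)))
          ∈ T) →
      (T.card : ℝ) ≤ ((Nat.choose (n ^ 2 / A) (q / 2) : ℝ)) ^ ((0.95 : ℝ) * B) →
      (Y.card : ℝ) ≤ 2 ^ ((1.99 : ℝ) * q * Real.logb 2 n) ∧
      (Y.card : ℝ) / ((n : ℝ) ^ 2) ^ q ≤ 2 ^ (-(0.01 : ℝ) * q * Real.logb 2 n) := by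
  refine ⟨2 ^ 131072, ?_⟩
  intro n hn k q A α B hA hα hq2 hq1 hsqrt hqk hkq hA1 hA2 hα1 hα2 hABn hnA Y sel hsel T
    hTmem hTcard
  have hn0 : 0 < n := lt_of_lt_of_le (pow_pos (by norm_num) 131072) hn
  obtain ⟨d, rfl⟩ := hnA
  have hd0 : 0 < d := by
    rcases Nat.eq_zero_or_pos d with h | h
    · subst h; simp at hA
    · exact h
  have hdm : d * α ^ B = n := by
    have h : n * (d * α ^ B) = n * n := by
      rw [show n * (d * α ^ B) = α ^ B * (n * d) from by ring, hABn]; ring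
    exact Nat.eq_of_mul_eq_mul_left hn0 h
  have hdn : d ≤ n := by
    calc d ≤ d * α ^ B := Nat.le_mul_of_pos_right d (pow_pos hα B)
      _ = n := hdm
  have hdivA : n ^ 2 / (n * d) = α ^ B :=
    Nat.div_eq_of_eq_mul_left hA hABn.symm
  rw [hdivA] at hTcard
  have hsN : q = 2 * (q / 2) := by omega
  have hs1 : 1 ≤ q / 2 := by omega
  have hqq : q - q / 2 = q / 2 := by omega
  rcases Y.eq_empty_or_nonempty with hYe | hYne
  · subst hYe
    constructor
    · simp only [Finset.card_empty, Nat.cast_zero]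
      positivity
    · simp only [Finset.card_empty, Nat.cast_zero, zero_div]
      positivity
  · have hT1 : 1 ≤ T.card := by
      obtain ⟨y0, hy0⟩ := hYne
      exact Finset.card_pos.mpr ⟨_, hTmem y0 hy0⟩
    have hcnt := aux_count hA hα hn0 hd0 hdn hdm Y sel hsel T hTmem
      (decode_aux hA hα hn0 hd0 hdm Y sel hsel)
    rw [hqq] at hcnt
    exact aux_final n k q (n * d) α B d (q / 2) T.card
      (Nat.choose (α ^ B) (q / 2)) hn hA hα hsN hs1 hsqrt hqk hkq hA1 hA2 hα1 hABn hdm hd0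
      rfl hT1 hTcard Y.card hcnt
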